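/- arXiv:2309.07573 — 6 statements merged into one kernel-verified Lean document; each statement's English description precedes it below -/
import Mathlib

section
/- Let $X$ be a separable infinite-dimensional Banach space over $\mathbb{K}$ ($\mathbb{K} = \mathbb{R}$ or $\mathbb{C}$), let $(e_k, e_k^*)_{k \in \mathbb{N}} \subseteq X \times X^*$ be a bounded biorthogonal sequence with dense span, and let $T : X \to X$ be a continuous linear operator which is upper-triangular with respect to $(e_k, e_k^*)_{k\in\mathbb{N}}$, with diagonal $\lambda_k := \langle e_k^*, T e_k \rangle$. If $\lambda_k \neq \lambda_l$ whenever $k \neq l$, then the linear span of $\bigcup_{k \in \mathbb{N}} \ker(T - \lambda_k I)$ is dense in $X$. -/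
open Filter Topology

/-- If `T` is an upper-triangular operator with respect to a bounded biorthogonal
sequence with dense span, whose diagonal entries are pairwise distinct, then the span of
the union of the eigenspaces `ker (T - λₖ I)` is dense. -/
theorem stmt_3 (𝕜 : Type*) [RCLike 𝕜] (X : Type*) [NormedAddCommGroup X]
    [NormedSpace 𝕜 X] [CompleteSpace X] [TopologicalSpace.SeparableSpace X]
    (hinf : ¬ FiniteDimensional 𝕜 X)
    (e : ℕ → X) (f : ℕ → X →L[𝕜] 𝕜)
    (hdense : Dense (Submodule.span 𝕜 (Set.range e) : Set X))
    (hbi : ∀ k j, f k (e j) = if k = j then 1 else 0)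
    (hnorm : ∀ k, ‖e k‖ = 1)
    (hbdd : ∃ K : ℝ, ∀ k, ‖f k‖ ≤ K)
    (T : X →L[𝕜] X)
    (htri : ∀ j, T (e j) ∈ Submodule.span 𝕜 (e '' {i | i ≤ j}))
    (lam : ℕ → 𝕜) (hlam : ∀ k, lam k = f k (T (e k)))
    (hdistinct : ∀ k l, k ≠ l → lam k ≠ lam l) :
    Dense (Submodule.span 𝕜
      (⋃ k, (LinearMap.ker ((T - lam k • (1 : X →L[𝕜] X)) : X →ₗ[𝕜] X) : Set X)) : Set X) := by
  classical
  set S : Submodule 𝕜 X := Submodule.span 𝕜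
      (⋃ k, (LinearMap.ker ((T - lam k • (1 : X →L[𝕜] X)) : X →ₗ[𝕜] X) : Set X)) with hS
  set A : ℕ → (X →L[𝕜] X) := fun k => T - lam k • 1 with hA
  have hAapp : ∀ k x, A k x = T x - lam k • x := by
    intro k x; simp [hA]
  set W : ℕ → Submodule 𝕜 X := fun n => Submodule.span 𝕜 (e '' {i | i < n}) with hW
  have hker : ∀ (s : Set ℕ) (j : ℕ), j ∉ s → ∀ x ∈ Submodule.span 𝕜 (e '' s), f j x = 0 := by
    intro s j hj x hx
    have hle : Submodule.span 𝕜 (e '' s) ≤ LinearMap.ker ((f j : X →ₗ[𝕜] 𝕜)) := by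
      rw [Submodule.span_le]
      rintro _ ⟨i, his, rfl⟩
      have h0 : f j (e i) = 0 := by
        rw [hbi]
        simp only [ite_eq_right_iff]
        rintro rfl; exact absurd his hj
      simpa [LinearMap.mem_ker] using h0
    exact LinearMap.mem_ker.mp (hle hx)
  have hTW : ∀ n, ∀ x ∈ W n, T x ∈ W n := by
    intro n
    have hle : W n ≤ Submodule.comap (T : X →ₗ[𝕜] X) (W n) := by
      rw [hW]
      rw [Submodule.span_le]
      rintro _ ⟨i, hi, rfl⟩
      simp only [Set.mem_setOf_eq] at hi
      have : T (e i) ∈ W n := by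
        refine Submodule.span_mono ?_ (htri i)
        exact Set.image_mono fun j hj => lt_of_le_of_lt hj hi
      exact this
    intro x hx
    exact Submodule.mem_comap.mp (hle hx)
  have hdrop : ∀ n x, x ∈ Submodule.span 𝕜 (e '' {i | i ≤ n}) → f n x = 0 → x ∈ W n := by
    intro n x hx hfx
    have hsplit : ({i | i ≤ n} : Set ℕ) = {i | i < n} ∪ {n} := by
      ext i
      simp only [Set.mem_setOf_eq, Set.mem_union, Set.mem_singleton_iff]
      omega
    rw [hsplit, Set.image_union, Submodule.span_union] at hx
    rcases Submodule.mem_sup.mp hx with ⟨w, hw, z, hz, rfl⟩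
    simp only [Set.image_singleton, Submodule.mem_span_singleton] at hz
    rcases hz with ⟨c, rfl⟩
    have h1 : f n w = 0 := hker _ n (by simp) w hw
    have h2 : f n (w + c • e n) = c := by
      simp [h1, hbi]
    rw [h2] at hfx
    simpa [hfx] using hw
  have hinj : ∀ n (μ : 𝕜), (∀ i, i < n → μ ≠ lam i) → ∀ x ∈ W n, T x - μ • x = 0 → x = 0 := by
    intro n
    induction n with
    | zero =>
      intro μ _ x hx _
      have hbot : W 0 = ⊥ := by
        simp [hW, Set.eq_empty_iff_forall_notMem]
      rw [hbot] at hx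
      simpa using hx
    | succ m ih =>
      intro μ hμ x hx hTx
      have hxV : x ∈ Submodule.span 𝕜 (e '' {i | i ≤ m}) := by
        have heq : ({i | i < m+1} : Set ℕ) = {i | i ≤ m} := by
          ext i; simp [Nat.lt_succ_iff]
        rw [hW] at hx
        simp only [heq] at hx
        exact hx
      have hsplit : ({i | i ≤ m} : Set ℕ) = {i | i < m} ∪ {m} := by
        ext i
        simp only [Set.mem_setOf_eq, Set.mem_union, Set.mem_singleton_iff]
        omega
      rw [hsplit, Set.image_union, Submodule.span_union] at hxV
      rcases Submodule.mem_sup.mp hxV with ⟨w, hw, z, hz, hxw⟩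
      simp only [Set.image_singleton, Submodule.mem_span_singleton] at hz
      rcases hz with ⟨c, rfl⟩
      subst hxw
      have hwW : w ∈ W m := hw
      have hfTw : f m (T w) = 0 := hker _ m (by simp) _ (hTW m w hwW)
      have hfw : f m w = 0 := hker _ m (by simp) w hwW
      have hlamm : f m (T (e m)) = lam m := (hlam m).symm
      have hfm : f m (T (w + c • e m) - μ • (w + c • e m)) = 0 := by
        rw [hTx]; simp
      have hc : c * lam m - μ * c = 0 := by
        have hcalc : f m (T (w + c • e m) - μ • (w + c • e m)) = c * lam m - μ * c := by
          simp [map_sub, map_add, map_smul, hfTw, hfw, hlamm, hbi, smul_eq_mul]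
        rw [hcalc] at hfm
        exact hfm
      have hc0 : c = 0 := by
        have : c * (lam m - μ) = 0 := by ring_nf; ring_nf at hc; linear_combination hc
        rcases mul_eq_zero.mp this with h | h
        · exact h
        · exact absurd (by linear_combination -h : μ = lam m) (fun hh => (hμ m (Nat.lt_succ_self m)) hh)
      subst hc0
      have hw0 : w = 0 := by
        apply ih μ (fun i hi => hμ i (Nat.lt_succ_of_lt hi)) w hwW
        simpa using hTx
      simp [hw0]
  have hmain : ∀ n, e n ∈ S := by
    intro n
    induction n using Nat.strong_induction_on with
    | _ n ih =>
      have hWS : W n ≤ S := by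
        rw [hW, Submodule.span_le]
        rintro _ ⟨i, hi, rfl⟩
        exact ih i hi
      haveI : FiniteDimensional 𝕜 (W n) := by
        apply FiniteDimensional.span_of_finite
        exact (Set.finite_Iio n).image e
      have hmaps : ∀ x ∈ W n, (A n) x ∈ W n := by
        intro x hx
        rw [hAapp]
        exact Submodule.sub_mem _ (hTW n x hx) (Submodule.smul_mem _ _ hx)
      let g : W n →ₗ[𝕜] W n := ((A n).toLinearMap).restrict hmaps
      have hginj : Function.Injective g := by
        intro a b hab
        have hAab : A n (a : X) = A n (b : X) := congrArg Subtype.val hab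
        have hdiff : (a : X) - b = 0 := by
          apply hinj n (lam n) (fun i hi => hdistinct n i (Nat.ne_of_gt hi)) _
            (Submodule.sub_mem _ a.2 b.2)
          have : A n ((a : X) - b) = 0 := by
            rw [map_sub, hAab, sub_self]
          rw [hAapp] at this
          simpa [smul_sub] using this
        exact Subtype.ext (sub_eq_zero.mp hdiff)
      have hgsurj : Function.Surjective g := LinearMap.injective_iff_surjective.mp hginj
      have hAen : (A n) (e n) ∈ W n := by
        apply hdrop
        · rw [hAapp]
          exact Submodule.sub_mem _ (htri n)
            (Submodule.smul_mem _ _ (Submodule.subset_span ⟨n, le_refl n, rfl⟩))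
        · rw [hAapp]
          simp [hbi, ← hlam n]
      obtain ⟨w, hww⟩ := hgsurj ⟨(A n) (e n), hAen⟩
      have hAw : (A n) (w : X) = (A n) (e n) := congrArg Subtype.val hww
      have hv : e n - (w : X) ∈ LinearMap.ker ((A n : X →ₗ[𝕜] X)) := by
        rw [LinearMap.mem_ker, map_sub, ContinuousLinearMap.coe_coe, hAw, sub_self]
      have h1 : e n - (w : X) ∈ S := by
        rw [hS]
        exact Submodule.subset_span (Set.mem_iUnion.mpr ⟨n, hv⟩)
      have h2 : (w : X) ∈ S := hWS w.2
      have h3 := Submodule.add_mem S h1 h2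
      simpa using h3
  have hsub : (Submodule.span 𝕜 (Set.range e) : Set X) ⊆ (S : Set X) := by
    apply SetLike.coe_subset_coe.mpr
    rw [Submodule.span_le]
    rintro _ ⟨k, rfl⟩
    exact hmain k
  exact hdense.mono hsub
end

section
/- Let $X$ be a separable infinite-dimensional Banach space over $\mathbb{K}$ ($\mathbb{K} = \mathbb{R}$ or $\mathbb{C}$), let $(e_k, e_k^*)_{k \in \mathbb{N}} \subseteq X \times X^*$ be a bounded biorthogonal sequence with dense span, and let $T : X \to X$ be a continuous linear operator which is upper-triangular with respect to $(e_k, e_k^*)_{k\in\mathbb{N}}$, with diagonal $\lambda_k := \langle e_k^*, T e_k \rangle$. If $\lambda_k \neq \lambda_l$ whenever $k \neq l$, then the set of cyclic vectors for $T$ is co-meager in $X$ (it contains a dense $G_\delta$ subset of $X$). -/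
open Filter Topology

section Stmt4AuxSection
open Polynomial

namespace Stmt4Aux

variable {𝕜 : Type*} [RCLike 𝕜] {X : Type*} [NormedAddCommGroup X] [NormedSpace 𝕜 X]

/-- span of first n basis vectors -/
noncomputable def F (𝕜 : Type*) [RCLike 𝕜] {X : Type*} [NormedAddCommGroup X]
    [NormedSpace 𝕜 X] (e : ℕ → X) (n : ℕ) : Submodule 𝕜 X :=
  Submodule.span 𝕜 (e '' Set.Iio n)

lemma F_zero (e : ℕ → X) : F 𝕜 e 0 = ⊥ := by
  have : Set.Iio 0 = (∅ : Set ℕ) := by ext i; simp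
  simp [F, this]

lemma F_mono (e : ℕ → X) {m n : ℕ} (h : m ≤ n) : F 𝕜 e m ≤ F 𝕜 e n :=
  Submodule.span_mono (Set.image_mono (fun _ hi => lt_of_lt_of_le hi h))

lemma F_succ (e : ℕ → X) (n : ℕ) : F 𝕜 e (n + 1) = F 𝕜 e n ⊔ (𝕜 ∙ e n) := by
  rw [F, F, ← Submodule.span_union, ← Set.image_singleton, ← Set.image_union]
  congr 1
  ext i
  constructor
  · rintro ⟨x, hx, rfl⟩
    exact ⟨x, by simp at hx ⊢; omega, rfl⟩
  · rintro ⟨x, hx, rfl⟩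
    exact ⟨x, by simp at hx ⊢; omega, rfl⟩

lemma f_eq_zero_on_F (e : ℕ → X) (f : ℕ → X →L[𝕜] 𝕜)
    (hbi : ∀ k j, f k (e j) = if k = j then 1 else 0)
    {n : ℕ} {z : X} (hz : z ∈ F 𝕜 e n) : f n z = 0 := by
  induction hz using Submodule.span_induction with
  | mem x hx =>
    obtain ⟨i, hi, rfl⟩ := hx
    simp only [hbi n i, if_neg (Nat.ne_of_gt hi)]
  | zero => simp
  | add x y hx hy ihx ihy => simp [ihx, ihy]
  | smul a x hx ihx => simp [ihx]

lemma strip (e : ℕ → X) (f : ℕ → X →L[𝕜] 𝕜)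
    (hbi : ∀ k j, f k (e j) = if k = j then 1 else 0)
    {n : ℕ} {z : X} (hz : z ∈ F 𝕜 e (n + 1)) : z - f n z • e n ∈ F 𝕜 e n := by
  rw [F_succ] at hz
  obtain ⟨u, hu, w, hw, rfl⟩ := Submodule.mem_sup.mp hz
  obtain ⟨c, rfl⟩ := Submodule.mem_span_singleton.mp hw
  have h1 : f n u = 0 := f_eq_zero_on_F e f hbi hu
  have h2 : f n (e n) = 1 := by simp [hbi]
  have : f n (u + c • e n) = c := by simp [h1, h2]
  rw [this]
  simpa using hu

lemma T_maps_F (e : ℕ → X) (T : X →L[𝕜] X)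
    (htri : ∀ j, T (e j) ∈ Submodule.span 𝕜 (e '' {i | i ≤ j}))
    {n : ℕ} {z : X} (hz : z ∈ F 𝕜 e n) : T z ∈ F 𝕜 e n := by
  induction hz using Submodule.span_induction with
  | mem x hx =>
    obtain ⟨i, hi, rfl⟩ := hx
    have hsub : Submodule.span 𝕜 (e '' {j | j ≤ i}) ≤ F 𝕜 e n :=
      Submodule.span_le.mpr ((Set.image_mono
        (fun j (hj : j ≤ i) => lt_of_le_of_lt hj hi)).trans (Submodule.subset_span))
    exact hsub (htri i)
  | zero => simp
  | add x y hx hy ihx ihy => simpa [map_add] using Submodule.add_mem _ ihx ihy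
  | smul a x hx ihx => simpa [map_smul] using Submodule.smul_mem _ a ihx

end Stmt4Aux

namespace Stmt4Aux
variable {𝕜 : Type*} [RCLike 𝕜] {X : Type*} [NormedAddCommGroup X] [NormedSpace 𝕜 X]

lemma surj (e : ℕ → X) (f : ℕ → X →L[𝕜] 𝕜)
    (hbi : ∀ k j, f k (e j) = if k = j then 1 else 0)
    (T : X →L[𝕜] X)
    (htri : ∀ j, T (e j) ∈ Submodule.span 𝕜 (e '' {i | i ≤ j}))
    (lam : ℕ → 𝕜) (hlam : ∀ k, lam k = f k (T (e k)))
    (k : ℕ) (hk : ∀ i, i < k → lam i ≠ lam k) :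
    ∀ n, n ≤ k → ∀ z ∈ F 𝕜 e n, ∃ w ∈ F 𝕜 e n, T w - lam k • w = z := by
  intro n
  induction n with
  | zero =>
    intro _ z hz
    rw [F_zero] at hz
    simp only [Submodule.mem_bot] at hz
    exact ⟨0, by simp [F_zero], by simp [hz]⟩
  | succ n ih =>
    intro hnk z hz
    have hnk' : n < k := hnk
    set c : 𝕜 := f n z with hc
    have hz' : z - c • e n ∈ F 𝕜 e n := strip e f hbi hz
    set μ : 𝕜 := lam n - lam k with hμ
    have hμ0 : μ ≠ 0 := sub_ne_zero.mpr (hk n hnk')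
    have heFn : T (e n) ∈ F 𝕜 e (n + 1) := by
      have : e n ∈ F 𝕜 e (n + 1) :=
        Submodule.subset_span ⟨n, Nat.lt_succ_self n, rfl⟩
      exact T_maps_F e T htri this
    have hr : T (e n) - lam n • e n ∈ F 𝕜 e n := by
      have := strip e f hbi heFn
      rwa [← hlam n] at this
    set r : X := T (e n) - lam n • e n with hrdef
    obtain ⟨w', hw', hw'eq⟩ := ih (Nat.le_of_succ_le hnk)
      ((z - c • e n) - (c / μ) • r)
      (Submodule.sub_mem _ hz' (Submodule.smul_mem _ _ hr))
    refine ⟨(c / μ) • e n + w', ?_, ?_⟩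
    · exact Submodule.add_mem _
        (Submodule.smul_mem _ _ (Submodule.subset_span ⟨n, Nat.lt_succ_self n, rfl⟩))
        (F_mono e (Nat.le_succ n) hw')
    · have hc' : c / μ * μ = c := div_mul_cancel₀ c hμ0
      have expand : T ((c / μ) • e n + w') - lam k • ((c / μ) • e n + w')
          = (c / μ) • (T (e n) - lam k • e n) + (T w' - lam k • w') := by
        simp only [map_add, map_smul]
        module
      have h2 : T (e n) - lam k • e n = r + μ • e n := by
        rw [hrdef, hμ]; module
      rw [expand, hw'eq, h2, smul_add, smul_smul, hc']
      module

end Stmt4Aux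

namespace Stmt4Aux
variable {𝕜 : Type*} [RCLike 𝕜] {X : Type*} [NormedAddCommGroup X] [NormedSpace 𝕜 X]
open Polynomial

lemma eigen (e : ℕ → X) (f : ℕ → X →L[𝕜] 𝕜)
    (hbi : ∀ k j, f k (e j) = if k = j then 1 else 0)
    (T : X →L[𝕜] X)
    (htri : ∀ j, T (e j) ∈ Submodule.span 𝕜 (e '' {i | i ≤ j}))
    (lam : ℕ → 𝕜) (hlam : ∀ k, lam k = f k (T (e k)))
    (k : ℕ) (hk : ∀ i, i < k → lam i ≠ lam k) :
    ∃ v : X, v - e k ∈ F 𝕜 e k ∧ T v = lam k • v := by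
  have heFk : T (e k) ∈ F 𝕜 e (k + 1) := by
    have : e k ∈ F 𝕜 e (k + 1) := Submodule.subset_span ⟨k, Nat.lt_succ_self k, rfl⟩
    exact T_maps_F e T htri this
  have hr : T (e k) - lam k • e k ∈ F 𝕜 e k := by
    have := strip e f hbi heFk
    rwa [← hlam k] at this
  obtain ⟨w, hw, hweq⟩ := surj e f hbi T htri lam hlam k hk k le_rfl _ hr
  refine ⟨e k - w, by simpa using Submodule.neg_mem _ hw, ?_⟩
  have : T (e k) - T w = lam k • e k - lam k • w := by
    have h1 : T (e k) = (T w - lam k • w) + lam k • e k := by rw [hweq]; module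
    rw [h1]; module
  rw [map_sub, this]; module

lemma span_v (e : ℕ → X) (v : ℕ → X) (hv : ∀ k, v k - e k ∈ F 𝕜 e k) (n : ℕ) :
    F 𝕜 e n ≤ Submodule.span 𝕜 (v '' Set.Iio n) := by
  induction n with
  | zero => rw [F_zero]; exact bot_le
  | succ n ih =>
    rw [F_succ]
    have hmono : Submodule.span 𝕜 (v '' Set.Iio n)
        ≤ Submodule.span 𝕜 (v '' Set.Iio (n + 1)) :=
      Submodule.span_mono (Set.image_mono fun _ hi => Nat.lt_succ_of_lt hi)
    refine sup_le (ih.trans hmono) ?_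
    rw [Submodule.span_singleton_le_iff_mem]
    have h1 : v n ∈ Submodule.span 𝕜 (v '' Set.Iio (n + 1)) :=
      Submodule.subset_span ⟨n, Nat.lt_succ_self n, rfl⟩
    have h2 : v n - e n ∈ Submodule.span 𝕜 (v '' Set.Iio (n + 1)) :=
      (ih.trans hmono) ((F_mono e (le_refl n)) (hv n))
    simpa using Submodule.sub_mem _ h1 h2

lemma aeval_eigen (T : X →L[𝕜] X) {μ : 𝕜} {v : X} (hv : T v = μ • v) (p : 𝕜[X]) :
    (aeval T p) v = (p.eval μ) • v := by
  induction p using Polynomial.induction_on with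
  | C c => simp [Polynomial.aeval_C, Algebra.algebraMap_eq_smul_one]
  | add p q hp hq =>
    simp only [map_add, ContinuousLinearMap.add_apply, hp, hq, eval_add, add_smul]
  | monomial n c ih =>
    have hXpow : (aeval T (C c * Polynomial.X ^ (n + 1))) v
        = (aeval T (C c * Polynomial.X ^ n)) (T v) := by
      rw [pow_succ, ← mul_assoc, map_mul, aeval_X, ContinuousLinearMap.mul_apply]
    rw [hXpow, hv, map_smul, ih]
    rw [smul_smul, eval_mul, eval_mul, eval_C, eval_pow, eval_X, eval_pow, eval_X]
    ring_nf

lemma aeval_mem_orbit (T : X →L[𝕜] X) (x : X) (p : 𝕜[X]) :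
    (aeval T p) x ∈ Submodule.span 𝕜 {y : X | ∃ n : ℕ, (T ^ n) x = y} := by
  induction p using Polynomial.induction_on with
  | C c =>
    have : x ∈ {y : X | ∃ n : ℕ, (T ^ n) x = y} := ⟨0, by simp⟩
    simpa [Polynomial.aeval_C, Algebra.algebraMap_eq_smul_one] using
      Submodule.smul_mem _ c (Submodule.subset_span this)
  | add p q hp hq =>
    simpa only [map_add, ContinuousLinearMap.add_apply] using Submodule.add_mem _ hp hq
  | monomial n c _ =>
    have h1 : (aeval T (C c * Polynomial.X ^ (n + 1))) x = c • ((T ^ (n + 1)) x) := by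
      rw [map_mul, aeval_C, aeval_X_pow, ContinuousLinearMap.mul_apply,
        Algebra.algebraMap_eq_smul_one]
      simp
    rw [h1]
    exact Submodule.smul_mem _ c (Submodule.subset_span ⟨n + 1, rfl⟩)

end Stmt4Aux

namespace Stmt4Aux
variable {𝕜 : Type*} [RCLike 𝕜] {X : Type*} [NormedAddCommGroup X] [NormedSpace 𝕜 X]
open Polynomial

lemma exists_F (e : ℕ → X) {z : X} (hz : z ∈ Submodule.span 𝕜 (Set.range e)) :
    ∃ n, z ∈ F 𝕜 e n := by
  induction hz using Submodule.span_induction with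
  | mem x hx =>
    obtain ⟨i, rfl⟩ := hx
    exact ⟨i + 1, Submodule.subset_span ⟨i, Nat.lt_succ_self i, rfl⟩⟩
  | zero => exact ⟨0, Submodule.zero_mem _⟩
  | add x y hx hy ihx ihy =>
    obtain ⟨m, hm⟩ := ihx; obtain ⟨n, hn⟩ := ihy
    exact ⟨max m n, Submodule.add_mem _ (F_mono e (le_max_left m n) hm)
      (F_mono e (le_max_right m n) hn)⟩
  | smul a x hx ihx =>
    obtain ⟨n, hn⟩ := ihx; exact ⟨n, Submodule.smul_mem _ a hn⟩

lemma image_Iio_eq_range (v : ℕ → X) (n : ℕ) :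
    v '' Set.Iio n = Set.range (fun i : Fin n => v i) := by
  ext x
  constructor
  · rintro ⟨i, hi, rfl⟩; exact ⟨⟨i, hi⟩, rfl⟩
  · rintro ⟨i, rfl⟩; exact ⟨i, i.isLt, rfl⟩

lemma key_dense (e : ℕ → X) (f : ℕ → X →L[𝕜] 𝕜)
    (hdense : Dense (Submodule.span 𝕜 (Set.range e) : Set X))
    (hbi : ∀ k j, f k (e j) = if k = j then 1 else 0)
    (T : X →L[𝕜] X)
    (htri : ∀ j, T (e j) ∈ Submodule.span 𝕜 (e '' {i | i ≤ j}))
    (lam : ℕ → 𝕜) (hlam : ∀ k, lam k = f k (T (e k)))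
    (hdistinct : ∀ k l, k ≠ l → lam k ≠ lam l)
    (y : X) (δ : ℝ) (hδ : 0 < δ) :
    Dense {x : X | ∃ p : 𝕜[X], ‖(aeval T p) x - y‖ < δ} := by
  -- eigenvectors
  choose v hv1 hv2 using fun k =>
    eigen e f hbi T htri lam hlam k (fun i hik => hdistinct i k (Nat.ne_of_lt hik))
  rw [Metric.dense_iff]
  intro x0 ε hε
  -- approximate x0 by y0 in the span
  obtain ⟨y0, hy0span, hy0close⟩ : ∃ y0 ∈ (Submodule.span 𝕜 (Set.range e) : Set X),
      dist x0 y0 < ε / 2 := by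
    have := Metric.mem_closure_iff.mp (hdense x0) (ε / 2) (by positivity)
    obtain ⟨y0, h1, h2⟩ := this
    exact ⟨y0, h1, h2⟩
  obtain ⟨u, huspan, huclose⟩ : ∃ u ∈ (Submodule.span 𝕜 (Set.range e) : Set X),
      dist y u < δ := by
    have := Metric.mem_closure_iff.mp (hdense y) δ hδ
    obtain ⟨u, h1, h2⟩ := this
    exact ⟨u, h1, h2⟩
  obtain ⟨N1, hN1⟩ := exists_F e hy0span
  obtain ⟨N2, hN2⟩ := exists_F e huspan
  set n := max N1 N2 with hn
  have hy0F : y0 ∈ F 𝕜 e n := F_mono e (le_max_left _ _) hN1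
  have huF : u ∈ F 𝕜 e n := F_mono e (le_max_right _ _) hN2
  have hspanv : F 𝕜 e n ≤ Submodule.span 𝕜 (Set.range (fun i : Fin n => v i)) := by
    rw [← image_Iio_eq_range]
    exact span_v e v hv1 n
  obtain ⟨b, hb⟩ := (Submodule.mem_span_range_iff_exists_fun 𝕜).mp (hspanv hy0F)
  obtain ⟨c, hc⟩ := (Submodule.mem_span_range_iff_exists_fun 𝕜).mp (hspanv huF)
  -- perturb coefficients
  set C : ℝ := ∑ i : Fin n, ‖v i‖ with hC
  have hC0 : 0 ≤ C := Finset.sum_nonneg fun i _ => norm_nonneg _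
  set τ : ℝ := (ε / 2) / (C + 1) with hτ
  have hτ0 : 0 < τ := by positivity
  set a : Fin n → 𝕜 := fun i => if b i = 0 then (τ : 𝕜) else b i with ha
  have ha0 : ∀ i, a i ≠ 0 := by
    intro i
    simp only [ha]
    split
    · exact_mod_cast RCLike.ofReal_ne_zero.mpr (ne_of_gt hτ0)
    · assumption
  have hab : ∀ i, ‖a i - b i‖ ≤ τ := by
    intro i
    simp only [ha]
    split
    · next h => rw [h, sub_zero]; rw [RCLike.norm_ofReal]; rw [abs_of_pos hτ0]
    · simp [le_of_lt hτ0]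
  set x : X := ∑ i : Fin n, a i • v i with hx
  have hxy0 : ‖x - y0‖ ≤ τ * C := by
    rw [hx, ← hb, ← Finset.sum_sub_distrib]
    have : ∀ i ∈ Finset.univ, a i • v i - b i • v i = (a i - b i) • v i := by
      intro i _; rw [sub_smul]
    rw [Finset.sum_congr rfl this]
    calc ‖∑ i : Fin n, (a i - b i) • v i‖
        ≤ ∑ i : Fin n, ‖(a i - b i) • v i‖ := norm_sum_le _ _
      _ ≤ ∑ i : Fin n, τ * ‖v i‖ := by
          refine Finset.sum_le_sum fun i _ => ?_
          rw [norm_smul]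
          exact mul_le_mul_of_nonneg_right (hab i) (norm_nonneg _)
      _ = τ * C := by rw [hC, Finset.mul_sum]
  -- interpolation polynomial
  have hinj : Set.InjOn (fun i : Fin n => lam i) ↑(Finset.univ : Finset (Fin n)) := by
    intro i _ j _ hij
    by_contra hne
    exact hdistinct i j (fun h => hne (Fin.val_injective h ▸ rfl)) hij
  set p : 𝕜[X] := Lagrange.interpolate Finset.univ (fun i : Fin n => lam i)
    (fun i => c i / a i) with hp
  have hpeval : ∀ i : Fin n, p.eval (lam i) = c i / a i := fun i =>
    Lagrange.eval_interpolate_at_node _ hinj (Finset.mem_univ i)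
  have hTx : (aeval T p) x = u := by
    rw [hx, map_sum, ← hc]
    refine Finset.sum_congr rfl fun i _ => ?_
    rw [map_smul, aeval_eigen T (hv2 i) p, hpeval i, smul_smul, mul_comm,
      div_mul_cancel₀ _ (ha0 i)]
  refine ⟨x, ?_, ⟨p, ?_⟩⟩
  · rw [Metric.mem_ball, dist_comm]
    calc dist x0 x ≤ dist x0 y0 + dist y0 x := dist_triangle _ _ _
      _ < ε / 2 + ε / 2 := by
          refine add_lt_add_of_lt_of_le hy0close ?_
          rw [dist_comm, dist_eq_norm]
          have h1 : τ * C ≤ τ * (C + 1) := by nlinarith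
          have h2 : τ * (C + 1) = ε / 2 := by rw [hτ]; field_simp
          linarith [hxy0]
      _ = ε := by ring
  · rw [hTx, ← dist_eq_norm, dist_comm]
    exact huclose

end Stmt4Aux


end Stmt4AuxSection

open Polynomial Stmt4Aux in
/-- If `T` is an upper-triangular operator with respect to a bounded biorthogonal
sequence with dense span, whose diagonal entries are pairwise distinct, then the set of
cyclic vectors for `T` is co-meager: it contains a dense `Gδ` subset of `X`. -/
theorem stmt_4 (𝕜 : Type*) [RCLike 𝕜] (X : Type*) [NormedAddCommGroup X]
    [NormedSpace 𝕜 X] [CompleteSpace X] [TopologicalSpace.SeparableSpace X]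
    (hinf : ¬ FiniteDimensional 𝕜 X)
    (e : ℕ → X) (f : ℕ → X →L[𝕜] 𝕜)
    (hdense : Dense (Submodule.span 𝕜 (Set.range e) : Set X))
    (hbi : ∀ k j, f k (e j) = if k = j then 1 else 0)
    (hnorm : ∀ k, ‖e k‖ = 1)
    (hbdd : ∃ K : ℝ, ∀ k, ‖f k‖ ≤ K)
    (T : X →L[𝕜] X)
    (htri : ∀ j, T (e j) ∈ Submodule.span 𝕜 (e '' {i | i ≤ j}))
    (lam : ℕ → 𝕜) (hlam : ∀ k, lam k = f k (T (e k)))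
    (hdistinct : ∀ k l, k ≠ l → lam k ≠ lam l) :
    ∃ G : Set X, IsGδ G ∧ Dense G ∧ ∀ x ∈ G,
      Dense (Submodule.span 𝕜 {y : X | ∃ n : ℕ, (T ^ n) x = y} : Set X) := by
  have : Nonempty X := ⟨0⟩
  set d : ℕ → X := TopologicalSpace.denseSeq X with hd
  have hdrange : DenseRange d := TopologicalSpace.denseRange_denseSeq X
  set U : ℕ → ℕ → Set X := fun j m =>
    {x : X | ∃ p : 𝕜[X], ‖(aeval T p) x - d j‖ < 1 / (m + 1)} with hU
  have hUopen : ∀ j m, IsOpen (U j m) := by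
    intro j m
    have : U j m = ⋃ p : 𝕜[X], {x : X | ‖(aeval T p) x - d j‖ < 1 / (m + 1)} := by
      ext x; simp [hU]
    rw [this]
    refine isOpen_iUnion fun p => ?_
    have hcont : Continuous fun x : X => ‖(aeval T p) x - d j‖ :=
      (((aeval T p).continuous).sub continuous_const).norm
    exact isOpen_lt hcont continuous_const
  have hUdense : ∀ j m, Dense (U j m) := fun j m =>
    key_dense e f hdense hbi T htri lam hlam hdistinct (d j) (1 / (m + 1))
      (by positivity)
  refine ⟨⋂ (j : ℕ) (m : ℕ), U j m, ?_, ?_, ?_⟩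
  · exact .iInter fun j => .iInter fun m => (hUopen j m).isGδ
  · have heq : (⋂ (j : ℕ) (m : ℕ), U j m) = ⋂ q : ℕ × ℕ, U q.1 q.2 := by
      ext x
      simp only [Set.mem_iInter, Prod.forall]
    rw [heq]
    exact dense_iInter_of_isOpen (fun q => hUopen q.1 q.2) (fun q => hUdense q.1 q.2)
  · intro x hx
    rw [Metric.dense_iff]
    intro z ε hε
    obtain ⟨j, hj⟩ := Metric.denseRange_iff.mp hdrange z (ε / 2) (by positivity)
    obtain ⟨m, hm⟩ := exists_nat_one_div_lt (show (0:ℝ) < ε / 2 by positivity)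
    have hxU : x ∈ U j m := by
      have := Set.mem_iInter.mp hx j
      exact Set.mem_iInter.mp this m
    obtain ⟨p, hp⟩ := hxU
    refine ⟨(aeval T p) x, ?_, aeval_mem_orbit T x p⟩
    rw [Metric.mem_ball]
    calc dist ((aeval T p) x) z ≤ dist ((aeval T p) x) (d j) + dist (d j) z :=
          dist_triangle _ _ _
      _ < ε / 2 + ε / 2 := by
          refine add_lt_add ?_ (by rwa [dist_comm])
          rw [dist_eq_norm]
          calc ‖(aeval T p) x - d j‖ < 1 / (m + 1) := hp
            _ < ε / 2 := by exact_mod_cast hm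
      _ = ε := by ring
end

section
/- Let $n \geq 1$ and $m \geq 1$ be integers with $2n \leq m$, and set $\lambda := \exp(2\pi i / m)$. Then $\left| \sum_{j=0}^{n-1} \lambda^j \right| \geq \frac{2}{\pi} n.$ -/
open Real Complex

lemma abs_exp_mul_I_sub_one' (x : ℝ) :
    ‖Complex.exp (x * Complex.I) - 1‖ = 2 * |Real.sin (x / 2)| := by
  have h1 : Complex.exp (x * Complex.I) - 1
      = Complex.ofReal (Real.cos x - 1) + Complex.ofReal (Real.sin x) * Complex.I := by
    rw [Complex.exp_mul_I]; push_cast; ring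
  rw [h1, Complex.norm_def, Complex.normSq_add_mul_I]
  have h2 : (Real.cos x - 1) ^ 2 + Real.sin x ^ 2 = (2 * |Real.sin (x / 2)|) ^ 2 := by
    have hs := Real.sin_sq_eq_half_sub (x / 2)
    rw [show 2 * (x / 2) = x from by ring] at hs
    have : (2 * |Real.sin (x / 2)|) ^ 2 = 4 * Real.sin (x / 2) ^ 2 := by
      rw [mul_pow, _root_.sq_abs]; ring
    rw [this, hs]
    have := Real.sin_sq_add_cos_sq x
    nlinarith
  rw [h2, Real.sqrt_sq (by positivity)]

/-- If `1 ≤ n`, `1 ≤ m` and `2n ≤ m`, and `λ = exp(2πi/m)`, then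
`|∑_{j=0}^{n-1} λ^j| ≥ (2/π)·n`. -/
theorem stmt_10 (n m : ℕ) (hn : 1 ≤ n) (hm : 1 ≤ m) (h : 2 * n ≤ m) :
    (2 / Real.pi) * (n : ℝ) ≤
      ‖(∑ j ∈ Finset.range n,
        Complex.exp (2 * (Real.pi : ℂ) * Complex.I / (m : ℂ)) ^ j)‖ := by
  have hm0 : (0 : ℝ) < m := by positivity
  set x : ℝ := 2 * Real.pi / m with hx
  have hxpos : 0 < x := by positivity
  have hlam : Complex.exp (2 * (Real.pi : ℂ) * Complex.I / (m : ℂ))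
      = Complex.exp ((x : ℂ) * Complex.I) := by
    congr 1
    push_cast [hx]
    have hmne : (m : ℂ) ≠ 0 := Nat.cast_ne_zero.2 (by omega)
    field_simp
  -- bounds on half-angles
  have hm2 : (2 : ℝ) ≤ m := by exact_mod_cast le_trans (by omega : 2 ≤ 2 * n) h
  have hhalf : x / 2 = Real.pi / m := by rw [hx]; ring
  have hhalf_pos : 0 < x / 2 := by positivity
  have hhalf_le : x / 2 ≤ Real.pi / 2 := by
    rw [hhalf]
    exact div_le_div_of_nonneg_left Real.pi_pos.le (by norm_num) hm2
  have hsin_pos : 0 < Real.sin (x / 2) :=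
    Real.sin_pos_of_pos_of_lt_pi hhalf_pos
      (lt_of_le_of_lt hhalf_le (by linarith [Real.pi_pos]))
  have hlamne : Complex.exp ((x : ℂ) * Complex.I) ≠ 1 := by
    intro hEq
    have : ‖Complex.exp ((x : ℝ) * Complex.I) - 1‖ = 0 := by
      rw [show ((x : ℝ) : ℂ) * Complex.I = (x : ℂ) * Complex.I from rfl, hEq]; simp
    rw [abs_exp_mul_I_sub_one'] at this
    have := abs_eq_zero.mp (by linarith [abs_nonneg (Real.sin (x / 2))] : |Real.sin (x/2)| = 0)
    linarith
  rw [hlam, geom_sum_eq hlamne, norm_div]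
  have hnum : (Complex.exp ((x : ℂ) * Complex.I)) ^ n - 1
      = Complex.exp ((↑(n * x) : ℂ) * Complex.I) - 1 := by
    rw [← Complex.exp_nat_mul]
    push_cast
    ring_nf
  rw [hnum, abs_exp_mul_I_sub_one' (n * x), abs_exp_mul_I_sub_one' x]
  -- angle bounds for n*x/2
  have hnx_pos : 0 < n * x / 2 := by positivity
  have hnx_le : n * x / 2 ≤ Real.pi / 2 := by
    rw [hx]
    rw [div_le_div_iff₀ (by norm_num) (by norm_num)]
    have : (n : ℝ) * (2 * Real.pi / m) * 2 = 4 * Real.pi * n / m := by ring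
    rw [this, div_le_iff₀ hm0]
    have h' : (2 * n : ℝ) ≤ m := by exact_mod_cast h
    nlinarith [Real.pi_pos]
  have hsin_n_pos : 0 ≤ Real.sin (n * x / 2) :=
    (Real.sin_pos_of_pos_of_lt_pi hnx_pos
      (lt_of_le_of_lt hnx_le (by linarith [Real.pi_pos]))).le
  rw [_root_.abs_of_nonneg hsin_n_pos, _root_.abs_of_nonneg hsin_pos.le]
  rw [le_div_iff₀ (by positivity)]
  have hb1 : Real.sin (x / 2) ≤ x / 2 := Real.sin_le hhalf_pos.le
  have hb2 : 2 / Real.pi * (n * x / 2) ≤ Real.sin (n * x / 2) :=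
    Real.mul_le_sin hnx_pos.le hnx_le
  have hpi := Real.pi_pos
  calc 2 / Real.pi * n * (2 * Real.sin (x / 2))
      ≤ 2 / Real.pi * n * (2 * (x / 2)) := by
        apply mul_le_mul_of_nonneg_left (by linarith) (by positivity)
    _ = 2 * (2 / Real.pi * (n * x / 2)) := by ring
    _ ≤ 2 * Real.sin (n * x / 2) := by linarith
end

section
/- Let $X$ be a Banach space over $\mathbb{K}$ ($\mathbb{K} = \mathbb{R}$ or $\mathbb{C}$), let $(e_k, e_k^*)_{k \in \mathbb{N}} \subseteq X \times X^*$ be a bounded biorthogonal sequence with dense span, with $K := \sup_{k} \|e_k^*\|$, and let $(\lambda_k)_{k\in\mathbb{N}}$ be a sequence in $\mathbb{K}$ with $\sum_{k\in\mathbb{N}} |\lambda_k - 1| < \infty$. Then there exists a (unique) continuous linear operator $R : X \to X$ such that $R e_k = \lambda_k e_k$ for every $k \in \mathbb{N}$, and $\|R\| \leq 1 + K \sum_{k\in\mathbb{N}} |\lambda_k - 1|$. -/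
open Filter Topology

/-- Given a bounded biorthogonal sequence with dense span on a Banach space `X` and a
sequence `(λₖ)` with `∑ |λₖ - 1| < ∞`, there is a unique continuous linear operator `R`
on `X` with `R eₖ = λₖ eₖ` for every `k`, and `‖R‖ ≤ 1 + K ∑ |λₖ - 1|`, where
`K = sup ‖eₖ*‖`. -/
theorem stmt_11 (𝕜 : Type*) [RCLike 𝕜] (X : Type*) [NormedAddCommGroup X]
    [NormedSpace 𝕜 X] [CompleteSpace X]
    (e : ℕ → X) (f : ℕ → X →L[𝕜] 𝕜)
    (hdense : Dense (Submodule.span 𝕜 (Set.range e) : Set X))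
    (hbi : ∀ k j, f k (e j) = if k = j then 1 else 0)
    (hnorm : ∀ k, ‖e k‖ = 1)
    (hbdd : BddAbove (Set.range fun k => ‖f k‖))
    (lam : ℕ → 𝕜) (hsum : Summable fun k => ‖lam k - 1‖) :
    ∃ R : X →L[𝕜] X, (∀ k, R (e k) = lam k • e k) ∧
      ‖R‖ ≤ 1 + (⨆ k, ‖f k‖) * ∑' k, ‖lam k - 1‖ ∧
      ∀ R' : X →L[𝕜] X, (∀ k, R' (e k) = lam k • e k) → R' = R := by
  set K := ⨆ k, ‖f k‖ with hK
  have hfK : ∀ k, ‖f k‖ ≤ K := fun k => le_ciSup hbdd k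
  have hK0 : 0 ≤ K := le_trans (norm_nonneg _) (hfK 0)
  set S := ∑' k, ‖lam k - 1‖ with hS
  have hS0 : 0 ≤ S := tsum_nonneg fun k => norm_nonneg _
  have hsummable : ∀ x : X, Summable fun k => ((lam k - 1) * f k x) • e k := by
    intro x
    apply Summable.of_norm_bounded (g := fun k => ‖lam k - 1‖ * (K * ‖x‖)) (hsum.mul_right _)
    intro k
    rw [norm_smul, hnorm, mul_one, norm_mul]
    gcongr
    exact le_trans ((f k).le_opNorm x) (by gcongr; exact hfK k)
  set L : X →ₗ[𝕜] X :=
    { toFun := fun x => x + ∑' k, ((lam k - 1) * f k x) • e k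
      map_add' := by
        intro x y
        simp only [map_add, mul_add, add_smul]
        rw [Summable.tsum_add (hsummable x) (hsummable y)]
        abel
      map_smul' := by
        intro c x
        simp only [map_smul, RingHom.id_apply, smul_add]
        congr 1
        rw [← tsum_const_smul'' c]
        congr 1
        ext k
        rw [smul_smul]
        congr 1
        simp only [smul_eq_mul]
        ring } with hL
  have hbound : ∀ x : X, ‖L x‖ ≤ (1 + K * S) * ‖x‖ := by
    intro x
    calc ‖x + ∑' k, ((lam k - 1) * f k x) • e k‖
        ≤ ‖x‖ + ‖∑' k, ((lam k - 1) * f k x) • e k‖ := norm_add_le _ _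
      _ ≤ ‖x‖ + ∑' k, ‖lam k - 1‖ * (K * ‖x‖) := by
          gcongr
          apply tsum_of_norm_bounded (g := fun k => ‖lam k - 1‖ * (K * ‖x‖))
            (hsum.mul_right _).hasSum
          intro k
          rw [norm_smul, hnorm, mul_one, norm_mul]
          gcongr
          exact le_trans ((f k).le_opNorm x) (by gcongr; exact hfK k)
      _ = (1 + K * S) * ‖x‖ := by
          rw [tsum_mul_right, ← hS]; ring
  refine ⟨L.mkContinuous (1 + K * S) hbound, ?_, ?_, ?_⟩
  · intro k
    show e k + ∑' j, ((lam j - 1) * f j (e k)) • e j = lam k • e k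
    have : ∑' j, ((lam j - 1) * f j (e k)) • e j = (lam k - 1) • e k := by
      rw [tsum_eq_single k]
      · rw [hbi k k, if_pos rfl, mul_one]
      · intro j hj
        rw [hbi j k, if_neg hj, mul_zero, zero_smul]
    rw [this, sub_smul, one_smul]
    abel
  · exact L.mkContinuous_norm_le (by positivity) hbound
  · intro R' hR'
    have hRe : ∀ k, (L.mkContinuous (1 + K * S) hbound) (e k) = lam k • e k := by
      intro k
      show e k + ∑' j, ((lam j - 1) * f j (e k)) • e j = lam k • e k
      have : ∑' j, ((lam j - 1) * f j (e k)) • e j = (lam k - 1) • e k := by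
        rw [tsum_eq_single k]
        · rw [hbi k k, if_pos rfl, mul_one]
        · intro j hj
          rw [hbi j k, if_neg hj, mul_zero, zero_smul]
      rw [this, sub_smul, one_smul]
      abel
    refine ContinuousLinearMap.ext_on hdense ?_
    rintro _ ⟨k, rfl⟩
    rw [hR' k, hRe k]
end

section
/- Let $X$ be a Banach space over $\mathbb{K}$ ($\mathbb{K} = \mathbb{R}$ or $\mathbb{C}$), let $(e_k, e_k^*)_{k \in \mathbb{N}} \subseteq X \times X^*$ be a bounded biorthogonal sequence with dense span, and let $(\varepsilon_k)_{k\in\mathbb{N}}$ be a sequence of strictly positive real numbers with $\varepsilon_k \to 0$ as $k \to \infty$. Then the set $G := \{ x \in X \; ; \; |\langle e_k^*, x \rangle| > \varepsilon_k \text{ for infinitely many } k \in \mathbb{N} \}$ is a dense $G_\delta$ subset of $X$; in particular, $G$ is co-meager. -/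
open Filter Topology

/-- Given a bounded biorthogonal sequence with dense span on a Banach space `X` and a
null sequence of strictly positive reals `(εₖ)`, the set of vectors `x` such that
`|⟨eₖ*, x⟩| > εₖ` for infinitely many `k` is a dense `Gδ` set; in particular it is
co-meager (i.e. residual). -/
theorem stmt_12 (𝕜 : Type*) [RCLike 𝕜] (X : Type*) [NormedAddCommGroup X]
    [NormedSpace 𝕜 X] [CompleteSpace X]
    (e : ℕ → X) (f : ℕ → X →L[𝕜] 𝕜)
    (hdense : Dense (Submodule.span 𝕜 (Set.range e) : Set X))
    (hbi : ∀ k j, f k (e j) = if k = j then 1 else 0)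
    (hnorm : ∀ k, ‖e k‖ = 1)
    (hbdd : ∃ K : ℝ, ∀ k, ‖f k‖ ≤ K)
    (eps : ℕ → ℝ) (heps : ∀ k, 0 < eps k) (hlim : Tendsto eps atTop (𝓝 0)) :
    IsGδ {x : X | ∃ᶠ k in atTop, eps k < ‖f k x‖} ∧
    Dense {x : X | ∃ᶠ k in atTop, eps k < ‖f k x‖} ∧
    {x : X | ∃ᶠ k in atTop, eps k < ‖f k x‖} ∈ residual X := by
  set U : ℕ → Set X := fun N => ⋃ k, ⋃ _ : N ≤ k, {x : X | eps k < ‖f k x‖} with hU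
  have hGeq : {x : X | ∃ᶠ k in atTop, eps k < ‖f k x‖} = ⋂ N, U N := by
    ext x
    simp [hU, Set.mem_iInter, Set.mem_iUnion, frequently_atTop]
  have hUopen : ∀ N, IsOpen (U N) := by
    intro N
    refine isOpen_iUnion fun k => isOpen_iUnion fun _ => ?_
    have : Continuous fun x : X => ‖f k x‖ := (f k).continuous.norm
    exact isOpen_lt continuous_const this
  have hUdense : ∀ N, Dense (U N) := by
    intro N
    rw [Metric.dense_iff]
    intro x r hr
    -- pick k ≥ N with eps k < r/4
    have h4 : (0:ℝ) < r / 4 := by linarith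
    have hev : ∀ᶠ k in atTop, eps k < r / 4 := hlim.eventually_lt_const h4
    obtain ⟨k, hkN, hk⟩ := ((eventually_ge_atTop N).and hev).exists
    by_cases hx : eps k < ‖f k x‖
    · exact ⟨x, Metric.mem_ball_self hr, Set.mem_iUnion.2 ⟨k, Set.mem_iUnion.2 ⟨hkN, hx⟩⟩⟩
    · push_neg at hx
      refine ⟨x + ((r/2 : ℝ) : 𝕜) • e k, ?_, ?_⟩
      · rw [Metric.mem_ball, dist_eq_norm]
        have : x + ((r/2 : ℝ) : 𝕜) • e k - x = ((r/2 : ℝ) : 𝕜) • e k := by ring_nf; abel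
        rw [this, norm_smul, hnorm k]
        simp only [mul_one]
        rw [RCLike.norm_ofReal]
        rw [abs_of_pos (by linarith)]
        linarith
      · refine Set.mem_iUnion.2 ⟨k, Set.mem_iUnion.2 ⟨hkN, ?_⟩⟩
        have hfk : f k (x + ((r/2 : ℝ) : 𝕜) • e k) = f k x + ((r/2 : ℝ) : 𝕜) := by
          rw [map_add, map_smul, hbi k k]
          simp
        show eps k < ‖f k (x + ((r/2 : ℝ) : 𝕜) • e k)‖
        rw [hfk]
        have h1 : ‖((r/2 : ℝ) : 𝕜)‖ - ‖f k x‖ ≤ ‖f k x + ((r/2 : ℝ) : 𝕜)‖ := by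
          have h := norm_sub_le (f k x + ((r/2 : ℝ) : 𝕜)) (f k x)
          have he : f k x + ((r/2 : ℝ) : 𝕜) - f k x = ((r/2 : ℝ) : 𝕜) := by ring
          rw [he] at h
          linarith
        have h2 : ‖((r/2 : ℝ) : 𝕜)‖ = r/2 := by
          rw [RCLike.norm_ofReal, abs_of_pos (by linarith)]
        linarith
  have hres : (⋂ N, U N) ∈ residual X := by
    refine countable_iInter_mem.2 fun N => residual_of_dense_open (hUopen N) (hUdense N)
  rw [hGeq]
  exact ⟨IsGδ.iInter fun N => (hUopen N).isGδ, dense_of_mem_residual hres, hres⟩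
end

section
/- Let $X$ be a complex separable infinite-dimensional Banach space with a bounded biorthogonal sequence $(e_k, e_k^*)_{k \in \mathbb{N}} \subseteq X \times X^*$ with dense span. Let $(m_j)_{j\in\mathbb{N}}$ be a strictly increasing sequence of positive integers with $m_j > j$ for all $j$, let $(\omega_{2j-1})_{j\in\mathbb{N}}$ be non-zero complex numbers with $\lim_{j\to\infty} 1/(m_j |\omega_{2j-1}|) = 0$, and set $\lambda_{2j-1} := \exp(2\pi i / m_j^2)$ and $\lambda_{2j} := \exp(2\pi i \cdot 2 / m_j^2)$ for each $j$. Suppose $T : X \to X$ is a continuous linear operator such that for every $x \in X$ and every $j \in \mathbb{N}$: $\langle e_{2j-1}^*, Tx \rangle = \lambda_{2j-1} \langle e_{2j-1}^*, x \rangle + \omega_{2j-1} \langle e_{2j}^*, x \rangle$ and $\langle e_{2j}^*, Tx \rangle = \lambda_{2j} \langle e_{2j}^*, x \rangle$. Then the set $\mathrm{RRec}(T)$ of reiteratively recurrent vectors for $T$ is meager in $X$. -/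
open Filter Topology

open scoped Classical in
/-- The upper Banach density of a set of natural numbers. -/
noncomputable def upperBanachDensity (J : Set ℕ) : ℝ :=
  Filter.limsup (fun N : ℕ =>
    ⨆ m : ℕ, (((Finset.Ioc m (m + N)).filter (· ∈ J)).card : ℝ) / (N : ℝ)) Filter.atTop

namespace Stmt15Aux

open Complex

/-- `|e^{iθ} - 1| = 2|sin(θ/2)|`. -/
lemma abs_exp_theta_sub_one (θ : ℝ) :
    ‖Complex.exp ((θ : ℂ) * Complex.I) - 1‖ = 2 * |Real.sin (θ / 2)| := by
  rw [Complex.exp_mul_I]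
  have h1 : Complex.cos θ + Complex.sin θ * Complex.I - 1
      = ((Real.cos θ - 1 : ℝ) : ℂ) + ((Real.sin θ : ℝ) : ℂ) * Complex.I := by
    push_cast
    ring
  rw [h1, Complex.norm_add_mul_I]
  have hs : Real.sin (θ / 2) ^ 2 = 1 / 2 - Real.cos (2 * (θ / 2)) / 2 :=
    Real.sin_sq_eq_half_sub (θ / 2)
  have hθ : (2 : ℝ) * (θ / 2) = θ := by ring
  rw [hθ] at hs
  have hc : Real.sin θ ^ 2 + Real.cos θ ^ 2 = 1 := Real.sin_sq_add_cos_sq θ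
  have habs : |Real.sin (θ / 2)| ^ 2 = Real.sin (θ / 2) ^ 2 := sq_abs _
  have h2 : (Real.cos θ - 1) ^ 2 + Real.sin θ ^ 2 = (2 * |Real.sin (θ / 2)|) ^ 2 := by
    nlinarith [habs, hs, hc]
  rw [h2, Real.sqrt_sq (by positivity)]

/-- `|e^{2πi/M · n} - 1| = 2 sin(π (n % M) / M)`. -/
lemma abs_pow_exp_sub_one (M : ℕ) (hM : 2 ≤ M) (n : ℕ) :
    ‖Complex.exp (((2 * Real.pi / (M : ℝ) : ℝ) : ℂ) * Complex.I) ^ n - 1‖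
      = 2 * Real.sin (Real.pi * ((n % M : ℕ) : ℝ) / (M : ℝ)) := by
  have hM0 : (0 : ℝ) < (M : ℝ) := by exact_mod_cast Nat.lt_of_lt_of_le Nat.zero_lt_two hM
  set q : ℕ := n / M with hq
  set r : ℕ := n % M with hr
  have hn : n = M * q + r := (Nat.div_add_mod n M).symm
  have hrM : r < M := Nat.mod_lt _ (by omega)
  have h1 : (Complex.exp (((2 * Real.pi / (M : ℝ) : ℝ) : ℂ) * Complex.I)) ^ n
      = Complex.exp ((n : ℂ) * (((2 * Real.pi / (M : ℝ) : ℝ) : ℂ) * Complex.I)) := by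
    rw [Complex.exp_nat_mul]
  have hreal : (n : ℝ) * (2 * Real.pi / (M : ℝ))
      = (q : ℝ) * (2 * Real.pi) + (2 * Real.pi * (r : ℝ) / (M : ℝ)) := by
    have hn' : (n : ℝ) = (M : ℝ) * (q : ℝ) + (r : ℝ) := by exact_mod_cast congrArg (Nat.cast : ℕ → ℝ) hn
    rw [hn']
    field_simp
  have h2 : (n : ℂ) * (((2 * Real.pi / (M : ℝ) : ℝ) : ℂ) * Complex.I)
      = ((q : ℤ) : ℂ) * (2 * (Real.pi : ℂ) * Complex.I)
        + ((2 * Real.pi * (r : ℝ) / (M : ℝ) : ℝ) : ℂ) * Complex.I := by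
    have : (n : ℂ) * (((2 * Real.pi / (M : ℝ) : ℝ) : ℂ))
        = ((q : ℤ) : ℂ) * (2 * (Real.pi : ℂ))
          + ((2 * Real.pi * (r : ℝ) / (M : ℝ) : ℝ) : ℂ) := by
      have := congrArg (Complex.ofReal : ℝ → ℂ) hreal
      push_cast at this ⊢
      linear_combination this
    calc (n : ℂ) * (((2 * Real.pi / (M : ℝ) : ℝ) : ℂ) * Complex.I)
        = ((n : ℂ) * ((2 * Real.pi / (M : ℝ) : ℝ) : ℂ)) * Complex.I := by ring
      _ = (((q : ℤ) : ℂ) * (2 * (Real.pi : ℂ))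
            + ((2 * Real.pi * (r : ℝ) / (M : ℝ) : ℝ) : ℂ)) * Complex.I := by rw [this]
      _ = _ := by ring
  rw [h1, h2, Complex.exp_add, Complex.exp_int_mul_two_pi_mul_I, one_mul,
    abs_exp_theta_sub_one]
  have h3 : 2 * Real.pi * (r : ℝ) / (M : ℝ) / 2 = Real.pi * (r : ℝ) / (M : ℝ) := by ring
  rw [h3, _root_.abs_of_nonneg]
  refine Real.sin_nonneg_of_nonneg_of_le_pi (by positivity) ?_
  have : (r : ℝ) / (M : ℝ) ≤ 1 := by
    rw [div_le_one hM0]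
    exact_mod_cast hrM.le
  calc Real.pi * (r : ℝ) / (M : ℝ) = Real.pi * ((r : ℝ) / (M : ℝ)) := by ring
    _ ≤ Real.pi * 1 := by
        exact mul_le_mul_of_nonneg_left this Real.pi_pos.le
    _ = Real.pi := by ring

/-- The rotation `e^{2πi/M}` is not `1` for `M ≥ 2`. -/
lemma exp_ne_one (M : ℕ) (hM : 2 ≤ M) :
    Complex.exp (((2 * Real.pi / (M : ℝ) : ℝ) : ℂ) * Complex.I) ≠ 1 := by
  have hM0 : (0 : ℝ) < (M : ℝ) := by exact_mod_cast Nat.lt_of_lt_of_le Nat.zero_lt_two hM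
  have hπ := Real.pi_pos
  intro hcon
  rw [Complex.exp_eq_one_iff] at hcon
  obtain ⟨k, hk⟩ := hcon
  have hkθ : ((2 * Real.pi / (M : ℝ) : ℝ) : ℂ) = (k : ℂ) * (2 * (Real.pi : ℂ)) := by
    have h2 : ((2 * Real.pi / (M : ℝ) : ℝ) : ℂ) * Complex.I
        = ((k : ℂ) * (2 * (Real.pi : ℂ))) * Complex.I := by
      rw [hk]; ring
    exact mul_right_cancel₀ Complex.I_ne_zero h2
  have hθreal : 2 * Real.pi / (M : ℝ) = (k : ℝ) * (2 * Real.pi) := by exact_mod_cast hkθ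
  have hθpos : 0 < 2 * Real.pi / (M : ℝ) := by positivity
  have hθlt : 2 * Real.pi / (M : ℝ) < 2 * Real.pi := by
    apply div_lt_self (by positivity)
    exact_mod_cast (by omega : 1 < M)
  have hk0 : (0 : ℝ) < (k : ℝ) := by nlinarith
  have hk1 : (k : ℝ) < 1 := by nlinarith
  have hk0' : (0 : ℤ) < k := by exact_mod_cast hk0
  have hk1' : k < 1 := by exact_mod_cast hk1
  omega

/-- From `2 sin(π r / M) ≤ η` conclude the residue is within `ηM/4` of `0` or `M`. -/
lemma residue_small (M : ℕ) (hM : 2 ≤ M) (n : ℕ) (η : ℝ)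
    (h : 2 * Real.sin (Real.pi * ((n % M : ℕ) : ℝ) / (M : ℝ)) ≤ η) :
    ((n % M : ℕ) : ℝ) ≤ η * M / 4 ∨ ((M : ℝ) - ((n % M : ℕ) : ℝ)) ≤ η * M / 4 := by
  have hM0 : (0 : ℝ) < (M : ℝ) := by exact_mod_cast Nat.lt_of_lt_of_le Nat.zero_lt_two hM
  set r : ℕ := n % M with hrdef
  have hrM : r < M := Nat.mod_lt _ (by omega)
  have hπ := Real.pi_pos
  by_cases hhalf : ((r : ℝ)) ≤ (M : ℝ) / 2
  · left
    have hx0 : 0 ≤ Real.pi * (r : ℝ) / (M : ℝ) := by positivity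
    have hx1 : Real.pi * (r : ℝ) / (M : ℝ) ≤ Real.pi / 2 := by
      rw [div_le_div_iff₀ hM0 two_pos]
      nlinarith
    have hsin := Real.mul_le_sin hx0 hx1
    have heq : 2 / Real.pi * (Real.pi * (r : ℝ) / (M : ℝ)) = 2 * (r : ℝ) / (M : ℝ) := by
      field_simp
    rw [heq] at hsin
    have h5 : (4 * (r : ℝ)) / (M : ℝ) ≤ η := by
      have h6 : (4 * (r : ℝ)) / (M : ℝ) = 2 * (2 * (r : ℝ) / (M : ℝ)) := by ring
      rw [h6]
      linarith
    rw [div_le_iff₀ hM0] at h5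
    linarith
  · right
    push_neg at hhalf
    set s : ℝ := (M : ℝ) - (r : ℝ) with hs
    have hs0 : 0 < s := by
      have : (r : ℝ) < (M : ℝ) := by exact_mod_cast hrM
      simp only [hs]
      linarith
    have hs2 : s ≤ (M : ℝ) / 2 := by simp only [hs]; linarith
    have hsineq : Real.sin (Real.pi * (r : ℝ) / (M : ℝ)) = Real.sin (Real.pi * s / (M : ℝ)) := by
      have harg : Real.pi * s / (M : ℝ) = Real.pi - Real.pi * (r : ℝ) / (M : ℝ) := by
        field_simp [hs]
        ring
      rw [harg, Real.sin_pi_sub]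
    rw [hsineq] at h
    have hx0 : 0 ≤ Real.pi * s / (M : ℝ) := by positivity
    have hx1 : Real.pi * s / (M : ℝ) ≤ Real.pi / 2 := by
      rw [div_le_div_iff₀ hM0 two_pos]
      nlinarith
    have hsin := Real.mul_le_sin hx0 hx1
    have heq : 2 / Real.pi * (Real.pi * s / (M : ℝ)) = 2 * s / (M : ℝ) := by
      field_simp
    rw [heq] at hsin
    have h5 : (4 * s) / (M : ℝ) ≤ η := by
      have h6 : (4 * s) / (M : ℝ) = 2 * (2 * s / (M : ℝ)) := by ring
      rw [h6]
      linarith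
    rw [div_le_iff₀ hM0] at h5
    linarith

open scoped Classical in
/-- Window counting: residues confined to `S` give at most `(N/M + 2) * #S` points per window. -/
lemma count_window (M : ℕ) (hM : 0 < M) (S : Finset ℕ) (J : Set ℕ)
    (hJ : ∀ n ∈ J, n % M ∈ S) (a N : ℕ) :
    (((Finset.Ioc a (a + N)).filter (· ∈ J)).card) ≤ (N / M + 2) * S.card := by
  calc (((Finset.Ioc a (a + N)).filter (· ∈ J)).card)
      ≤ ((Finset.Icc (a / M) ((a + N) / M)) ×ˢ S).card := by
        apply Finset.card_le_card_of_injOn (fun n => (n / M, n % M))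
        · intro n hn
          simp only [Finset.coe_filter, Finset.mem_filter, Finset.mem_Ioc, Set.mem_setOf_eq] at hn
          simp only [Finset.coe_product, Set.mem_prod, Finset.mem_coe, Finset.mem_Icc]
          exact ⟨⟨Nat.div_le_div_right hn.1.1.le, Nat.div_le_div_right hn.1.2⟩, hJ n hn.2⟩
        · intro p _ q _ hpq
          have h1 : p / M = q / M := congrArg Prod.fst hpq
          have h2 : p % M = q % M := congrArg Prod.snd hpq
          have hp : M * (p / M) + p % M = p := Nat.div_add_mod p M
          rw [h1, h2, Nat.div_add_mod] at hp
          exact hp.symm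
    _ = (Finset.Icc (a / M) ((a + N) / M)).card * S.card := Finset.card_product _ _
    _ ≤ (N / M + 2) * S.card := by
        apply Nat.mul_le_mul_right
        rw [Nat.card_Icc]
        have key : (a + N) / M ≤ a / M + N / M + 1 := by
          have h1 : a + N < (a / M + N / M + 2) * M := by
            have ha := Nat.div_add_mod a M
            have hb := Nat.div_add_mod N M
            have ha' := Nat.mod_lt a hM
            have hb' := Nat.mod_lt N hM
            nlinarith [ha, hb, ha', hb']
          exact Nat.lt_succ_iff.mp ((Nat.div_lt_iff_lt_mul hM).mpr h1)
        generalize hu : a / M = u at key ⊢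
        generalize hv : N / M = v at key ⊢
        generalize hw : (a + N) / M = w at key ⊢
        omega

open scoped Classical in
/-- Upper Banach density bound from residue confinement. -/
lemma ubd_le (J : Set ℕ) (M : ℕ) (hM : 0 < M) (S : Finset ℕ)
    (hJ : ∀ n ∈ J, n % M ∈ S) :
    upperBanachDensity J ≤ (S.card : ℝ) / (M : ℝ) := by
  have hM0 : (0 : ℝ) < (M : ℝ) := by exact_mod_cast hM
  have hcard0 : (0 : ℝ) ≤ (S.card : ℝ) := by positivity
  set g : ℕ → ℝ := fun N =>
    ⨆ a : ℕ, (((Finset.Ioc a (a + N)).filter (· ∈ J)).card : ℝ) / (N : ℝ) with hg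
  have hterm : ∀ N a : ℕ, 1 ≤ N →
      (((Finset.Ioc a (a + N)).filter (· ∈ J)).card : ℝ) / (N : ℝ)
        ≤ (S.card : ℝ) / (M : ℝ) + 2 * (S.card : ℝ) / (N : ℝ) := by
    intro N a hN
    have hN0 : (0 : ℝ) < (N : ℝ) := by exact_mod_cast hN
    have h1 : (((Finset.Ioc a (a + N)).filter (· ∈ J)).card : ℝ)
        ≤ ((N / M : ℕ) : ℝ) * (S.card : ℝ) + 2 * (S.card : ℝ) := by
      have h := count_window M hM S J hJ a N
      have h' : (((Finset.Ioc a (a + N)).filter (· ∈ J)).card : ℝ)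
          ≤ (((N / M + 2) * S.card : ℕ) : ℝ) := by exact_mod_cast h
      push_cast at h'
      linarith
    have h2 : ((N / M : ℕ) : ℝ) ≤ (N : ℝ) / (M : ℝ) := Nat.cast_div_le
    rw [div_le_iff₀ hN0]
    have hexp : ((S.card : ℝ) / (M : ℝ) + 2 * (S.card : ℝ) / (N : ℝ)) * (N : ℝ)
        = (N : ℝ) / (M : ℝ) * (S.card : ℝ) + 2 * (S.card : ℝ) := by
      field_simp
    rw [hexp]
    nlinarith
  have hgN : ∀ N : ℕ, 1 ≤ N → g N ≤ (S.card : ℝ) / (M : ℝ) + 2 * (S.card : ℝ) / (N : ℝ) := by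
    intro N hN
    exact ciSup_le fun a => hterm N a hN
  have hg0 : ∀ N : ℕ, 0 ≤ g N := by
    intro N
    exact Real.iSup_nonneg fun a => by positivity
  have hcb : Filter.IsCoboundedUnder (· ≤ ·) Filter.atTop g :=
    Filter.isCoboundedUnder_le_of_le Filter.atTop (x := 0) hg0
  show Filter.limsup g Filter.atTop ≤ (S.card : ℝ) / (M : ℝ)
  by_contra hcon
  push_neg at hcon
  set ε : ℝ := (Filter.limsup g Filter.atTop - (S.card : ℝ) / (M : ℝ)) / 2 with hε
  have hε0 : 0 < ε := by
    simp only [hε]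
    linarith
  have hev : ∀ᶠ N : ℕ in Filter.atTop, g N ≤ (S.card : ℝ) / (M : ℝ) + ε := by
    have h2N : ∀ᶠ N : ℕ in Filter.atTop, 2 * (S.card : ℝ) / (N : ℝ) ≤ ε := by
      have ht := tendsto_const_div_atTop_nhds_zero_nat (2 * (S.card : ℝ))
      exact ht.eventually (ge_mem_nhds hε0)
    filter_upwards [h2N, Filter.eventually_ge_atTop 1] with N h1 h2
    calc g N ≤ (S.card : ℝ) / (M : ℝ) + 2 * (S.card : ℝ) / (N : ℝ) := hgN N h2
      _ ≤ (S.card : ℝ) / (M : ℝ) + ε := by linarith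
  have := Filter.limsup_le_of_le hcb hev
  simp only [hε] at this
  linarith

/-- Coordinate functionals of a bounded biorthogonal system with dense span tend to zero
pointwise. -/
lemma coords_tendsto_zero {X : Type*} [NormedAddCommGroup X] [NormedSpace ℂ X]
    (e : ℕ → X) (f : ℕ → X →L[ℂ] ℂ)
    (hdense : Dense (Submodule.span ℂ (Set.range e) : Set X))
    (hbi : ∀ k j, f k (e j) = if k = j then 1 else 0)
    {K : ℝ} (hK0 : 0 < K) (hK : ∀ k, ‖f k‖ ≤ K) (x : X) :
    Tendsto (fun k => ‖f k x‖) atTop (𝓝 0) := by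
  rw [Metric.tendsto_atTop]
  intro ε hε
  obtain ⟨y, hy, hxy⟩ := hdense.exists_dist_lt x (show (0 : ℝ) < ε / (2 * K) by positivity)
  rw [SetLike.mem_coe, Finsupp.mem_span_range_iff_exists_finsupp] at hy
  obtain ⟨c, hc⟩ := hy
  refine ⟨c.support.sup id + 1, fun k hk => ?_⟩
  have hfy : f k y = 0 := by
    rw [← hc, map_finsuppSum, Finsupp.sum]
    apply Finset.sum_eq_zero
    intro i hi
    have hik : k ≠ i := by
      have : i ≤ c.support.sup id := Finset.le_sup (f := id) hi
      omega
    rw [map_smul, hbi, if_neg hik, smul_zero]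
  have : f k x = f k (x - y) + f k y := by rw [map_sub]; ring
  rw [Real.dist_eq, sub_zero, _root_.abs_of_nonneg (norm_nonneg _), this, hfy, add_zero]
  calc ‖f k (x - y)‖ ≤ ‖f k‖ * ‖x - y‖ := (f k).le_opNorm _
    _ ≤ K * ‖x - y‖ := by
        exact mul_le_mul_of_nonneg_right (hK k) (norm_nonneg _)
    _ = K * dist x y := by rw [dist_eq_norm]
    _ < K * (ε / (2 * K)) := by
        exact mul_lt_mul_of_pos_left hxy hK0
    _ = ε / 2 := by field_simp
    _ < ε := by linarith

/-- The power formula for the blockwise action. -/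
lemma power_formula {X : Type*} [NormedAddCommGroup X] [NormedSpace ℂ X]
    (f : ℕ → X →L[ℂ] ℂ) (T : X →L[ℂ] X) (j : ℕ) (lam om : ℂ)
    (hlam0 : lam ≠ 0) (hlam1 : lam ≠ 1)
    (h1 : ∀ x : X, f (2 * j) (T x) = lam * f (2 * j) x + om * f (2 * j + 1) x)
    (h2 : ∀ x : X, f (2 * j + 1) (T x) = lam ^ 2 * f (2 * j + 1) x) (x : X) :
    ∀ n : ℕ, f (2 * j + 1) ((T ^ n) x) = (lam ^ 2) ^ n * f (2 * j + 1) x ∧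
      f (2 * j) ((T ^ n) x) = lam ^ n * f (2 * j) x
        + om * (((lam ^ 2) ^ n - lam ^ n) / (lam ^ 2 - lam)) * f (2 * j + 1) x := by
  have hne : lam ^ 2 - lam ≠ 0 := by
    have h : lam ^ 2 - lam = lam * (lam - 1) := by ring
    rw [h]
    exact mul_ne_zero hlam0 (sub_ne_zero.mpr hlam1)
  intro n
  induction n with
  | zero => simp
  | succ n ih =>
    have hTn : (T ^ (n + 1)) x = T ((T ^ n) x) := by
      rw [pow_succ']
      rfl
    constructor
    · rw [hTn, h2, ih.1, pow_succ]
      ring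
    · rw [hTn, h1, ih.1, ih.2]
      field_simp
      ring

end Stmt15Aux

open Stmt15Aux

/-- The operator `T = D_λ + B_ω` acting blockwise by the `2 × 2` blocks
`!![exp(2πi/mⱼ²), ωⱼ; 0, exp(4πi/mⱼ²)]` on the coordinates `(2j, 2j+1)` of a bounded
biorthogonal sequence with dense span (indices written `0`-based, so that the pair
`(e_{2j-1}, e_{2j})` of the paper, `j ≥ 1`, becomes `(e (2*j), e (2*j+1))`), where
`(mⱼ)` is strictly increasing with `mⱼ > j`, `ωⱼ ≠ 0` and `1/(mⱼ|ωⱼ|) → 0`, has a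
meager set of reiteratively recurrent vectors. -/
theorem stmt_15 (X : Type*) [NormedAddCommGroup X] [NormedSpace ℂ X] [CompleteSpace X]
    [TopologicalSpace.SeparableSpace X] (hinf : ¬ FiniteDimensional ℂ X)
    (e : ℕ → X) (f : ℕ → X →L[ℂ] ℂ)
    (hdense : Dense (Submodule.span ℂ (Set.range e) : Set X))
    (hbi : ∀ k j, f k (e j) = if k = j then 1 else 0)
    (hnorm : ∀ k, ‖e k‖ = 1)
    (hbdd : ∃ K : ℝ, ∀ k, ‖f k‖ ≤ K)
    (m : ℕ → ℕ) (hmono : StrictMono m) (hm : ∀ j, j + 1 < m j)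
    (ω : ℕ → ℂ) (hω : ∀ j, ω j ≠ 0)
    (hlim : Tendsto (fun j => 1 / ((m j : ℝ) * ‖ω j‖)) atTop (𝓝 0))
    (T : X →L[ℂ] X)
    (hT1 : ∀ (x : X) (j : ℕ), f (2 * j) (T x) =
      Complex.exp (2 * (Real.pi : ℂ) * Complex.I / (m j : ℂ) ^ 2) * f (2 * j) x
        + ω j * f (2 * j + 1) x)
    (hT2 : ∀ (x : X) (j : ℕ), f (2 * j + 1) (T x) =
      Complex.exp (2 * (Real.pi : ℂ) * Complex.I * 2 / (m j : ℂ) ^ 2) * f (2 * j + 1) x) :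
    IsMeagre {x : X | ∀ U ∈ 𝓝 x,
      0 < upperBanachDensity {n : ℕ | 1 ≤ n ∧ (T ^ n) x ∈ U}} := by
  classical
  obtain ⟨K, hK⟩ := hbdd
  have hπ := Real.pi_pos
  have hK1 : (1 : ℝ) ≤ K := by
    have h00 : f 0 (e 0) = 1 := by simpa using hbi 0 0
    have : (1 : ℝ) ≤ ‖f 0‖ := by
      have := (f 0).le_opNorm (e 0)
      rw [h00, hnorm 0, mul_one] at this
      simpa using this
    linarith [hK 0]
  have hK0 : (0 : ℝ) < K := lt_of_lt_of_le one_pos hK1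
  have hm2 : ∀ j, 2 ≤ m j := fun j => by have := hm j; omega
  -- the coordinates of any vector tend to zero
  have hcoord : ∀ x : X, Tendsto (fun k => ‖f k x‖) atTop (𝓝 0) :=
    fun x => coords_tendsto_zero e f hdense hbi hK0 hK x
  -- growth of `m², m²|ω|`
  have hgrow : Tendsto (fun j => ((m j : ℝ)) ^ 2 * ‖ω j‖) atTop atTop := by
    rw [tendsto_atTop]
    intro b
    set b' : ℝ := max b 1 with hb'
    have hb'0 : 0 < b' := lt_of_lt_of_le one_pos (le_max_right _ _)
    have hev := hlim.eventually (ge_mem_nhds (show (0:ℝ) < 1 / b' by positivity))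
    filter_upwards [hev] with j hj
    have hmj : (2 : ℝ) ≤ (m j : ℝ) := by exact_mod_cast hm2 j
    have hωj : 0 < ‖ω j‖ := norm_pos_iff.mpr (hω j)
    have hprod : 0 < (m j : ℝ) * ‖ω j‖ := by
      have : (0:ℝ) < (m j : ℝ) := by linarith
      positivity
    have h1 : 1 / ((m j : ℝ) * ‖ω j‖) ≤ 1 / b' := hj
    have h2 : b' ≤ (m j : ℝ) * ‖ω j‖ := by
      rw [div_le_div_iff₀ hprod hb'0] at h1
      linarith
    have habs : ‖ω j‖ = ‖ω j‖ := rfl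
    rw [habs] at h2
    have h3 : (m j : ℝ) * ‖ω j‖ ≤ ((m j : ℝ)) ^ 2 * ‖ω j‖ := by nlinarith
    calc b ≤ b' := le_max_left _ _
      _ ≤ ((m j : ℝ)) ^ 2 * ‖ω j‖ := by linarith
  -- the family of closed "trap" sets
  set G : ℕ → Set X := fun A =>
    {x | ∀ j, ((m j : ℝ)) ^ 2 * ‖ω j‖ * ‖f (2 * j + 1) x‖ ≤ A} with hG
  -- each G A is meagre
  have hGmeagre : ∀ A : ℕ, IsMeagre (G A) := by
    intro A
    have hclosed : IsClosed (G A) := by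
      have hGi : G A = ⋂ j, {x : X | ((m j : ℝ)) ^ 2 * ‖ω j‖ * ‖f (2 * j + 1) x‖ ≤ A} := by
        ext x
        simp [hG, Set.mem_iInter]
      rw [hGi]
      refine isClosed_iInter fun j => isClosed_le ?_ continuous_const
      exact (continuous_const.mul ((f (2 * j + 1)).continuous.norm))
    have hint : interior (G A) = ∅ := by
      by_contra hne
      obtain ⟨x, hx⟩ := Set.nonempty_iff_ne_empty.mpr hne
      have hxnhds : G A ∈ 𝓝 x := mem_interior_iff_mem_nhds.mp hx
      obtain ⟨r, hr0, hball⟩ := Metric.mem_nhds_iff.mp hxnhds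
      -- choose a large index j
      have hev1 : ∀ᶠ j : ℕ in atTop, ‖f (2 * j + 1) x‖ < r / 4 := by
        have := (hcoord x).eventually (eventually_lt_nhds (show (0:ℝ) < r / 4 by positivity))
        rw [eventually_atTop] at this ⊢
        obtain ⟨N, hN⟩ := this
        exact ⟨N, fun j hj => hN (2 * j + 1) (by omega)⟩
      have hev2 : ∀ᶠ j : ℕ in atTop, (A : ℝ) < ((m j : ℝ)) ^ 2 * ‖ω j‖ * (r / 4) := by
        have := hgrow.eventually_gt_atTop ((A : ℝ) * (4 / r))
        filter_upwards [this] with j hj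
        have : (A : ℝ) * (4 / r) * (r / 4) < ((m j : ℝ)) ^ 2 * ‖ω j‖ * (r / 4) := by
          apply mul_lt_mul_of_pos_right hj (by positivity)
        calc (A : ℝ) = (A : ℝ) * (4 / r) * (r / 4) := by field_simp
          _ < _ := this
      obtain ⟨j, hj1, hj2⟩ := (hev1.and hev2).exists
      set y : X := x + ((r / 2 : ℝ) : ℂ) • e (2 * j + 1) with hy
      have hyball : y ∈ Metric.ball x r := by
        rw [Metric.mem_ball, dist_eq_norm]
        have : y - x = ((r / 2 : ℝ) : ℂ) • e (2 * j + 1) := by rw [hy]; abel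
        rw [this, norm_smul, hnorm, mul_one]
        simp only [Complex.norm_real, Real.norm_eq_abs]
        rw [abs_of_pos (by positivity)]
        linarith
      have hyG := hball hyball j
      have hfy : f (2 * j + 1) y = f (2 * j + 1) x + ((r / 2 : ℝ) : ℂ) := by
        rw [hy, map_add, map_smul, hbi, if_pos rfl, smul_eq_mul, mul_one]
      have hfy_lb : r / 4 ≤ ‖f (2 * j + 1) y‖ := by
        have h1 : ‖((r / 2 : ℝ) : ℂ)‖ ≤ ‖f (2 * j + 1) y‖ + ‖f (2 * j + 1) x‖ := by
          have : ((r / 2 : ℝ) : ℂ) = f (2 * j + 1) y - f (2 * j + 1) x := by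
            rw [hfy]; ring
          rw [this]
          exact norm_sub_le _ _
        have h2 : ‖((r / 2 : ℝ) : ℂ)‖ = r / 2 := by
          simp only [Complex.norm_real, Real.norm_eq_abs]
          exact abs_of_pos (by positivity)
        rw [h2] at h1
        linarith
      have : ((m j : ℝ)) ^ 2 * ‖ω j‖ * (r / 4) ≤ (A : ℝ) := by
        calc ((m j : ℝ)) ^ 2 * ‖ω j‖ * (r / 4)
            ≤ ((m j : ℝ)) ^ 2 * ‖ω j‖ * ‖f (2 * j + 1) y‖ := by
              apply mul_le_mul_of_nonneg_left hfy_lb (by positivity)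
          _ ≤ (A : ℝ) := hyG
      linarith
    -- closed with empty interior implies meagre
    rw [isMeagre_iff_countable_union_isNowhereDense]
    exact ⟨{G A}, by
      intro t ht
      rw [Set.mem_singleton_iff] at ht
      rw [ht, hclosed.isNowhereDense_iff]
      exact hint, Set.countable_singleton _, by
      rw [Set.sUnion_singleton]⟩
  clear_value G
  -- the main inclusion
  have hsub : {x : X | ∀ U ∈ 𝓝 x,
      0 < upperBanachDensity {n : ℕ | 1 ≤ n ∧ (T ^ n) x ∈ U}} ⊆ ⋃ A : ℕ, G A := by
    intro x hx
    rw [Set.mem_iUnion]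
    by_contra hxA
    push_neg at hxA
    simp only [hG, Set.mem_setOf_eq, not_forall, not_le] at hxA
    -- the return set for the unit ball
    set Jset : Set ℕ := {n : ℕ | 1 ≤ n ∧ (T ^ n) x ∈ Metric.ball x 1} with hJset
    set d : ℝ := upperBanachDensity Jset with hd
    clear_value d
    clear_value Jset
    have hd0 : 0 < d := by
      rw [hd, hJset]
      exact hx (Metric.ball x 1) (Metric.ball_mem_nhds x one_pos)
    -- find a good index j : both m j large and V j large
    set V : ℕ → ℝ := fun j => ((m j : ℝ)) ^ 2 * ‖ω j‖ * ‖f (2 * j + 1) x‖ with hV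
    clear_value V
    have hxA' : ∀ A : ℕ, ∃ j, (A : ℝ) < V j := by
      intro A
      have h := hxA A
      simp only [hV]
      exact h
    obtain ⟨J₀, hJ₀⟩ : ∃ J₀ : ℕ, 8 / d < ((m J₀ : ℝ)) ^ 2 := by
      refine ⟨⌈8 / d⌉₊, ?_⟩
      have h1 : (8 / d : ℝ) ≤ (⌈8 / d⌉₊ : ℝ) := Nat.le_ceil _
      have h2 : ⌈8 / d⌉₊ + 2 ≤ m ⌈8 / d⌉₊ := by have := hm ⌈8 / d⌉₊; omega
      have h2' : ((⌈8 / d⌉₊ : ℕ) : ℝ) + 2 ≤ (m ⌈8 / d⌉₊ : ℝ) := by exact_mod_cast h2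
      have h3 : (1 : ℝ) ≤ (m ⌈8 / d⌉₊ : ℝ) := by
        have := hm2 ⌈8 / d⌉₊
        exact_mod_cast (by omega : 1 ≤ m ⌈8 / d⌉₊)
      nlinarith
    have hex : ∃ j, J₀ ≤ j ∧ 2 * Real.pi * (K * ‖x‖ + 4 * K / d) < V j := by
      set t : ℝ := 2 * Real.pi * (K * ‖x‖ + 4 * K / d) with ht
      set C : ℝ := (Finset.range (J₀ + 1)).sup'
        (Finset.nonempty_range_iff.mpr (Nat.succ_ne_zero J₀)) V with hC
      obtain ⟨j, hjV⟩ := hxA' ⌈max t C⌉₊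
      have hAle : max t C ≤ (⌈max t C⌉₊ : ℝ) := Nat.le_ceil _
      refine ⟨j, ?_, lt_of_le_of_lt (le_trans (le_max_left _ _) hAle) hjV⟩
      by_contra hcon
      push_neg at hcon
      have hVC : V j ≤ C := Finset.le_sup' V (Finset.mem_range.mpr (by omega))
      have hVA : V j ≤ (⌈max t C⌉₊ : ℝ) := le_trans hVC (le_trans (le_max_right _ _) hAle)
      linarith
    obtain ⟨j, hjJ₀, hjt⟩ := hex
    -- set up the rotation
    set M : ℕ := (m j) ^ 2 with hM
    clear_value M
    have hMj2 : 2 ≤ m j := hm2 j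
    have hM4 : 4 ≤ M := by
      have : 2 * 2 ≤ m j * m j := Nat.mul_le_mul hMj2 hMj2
      simpa [hM, pow_two] using this
    have hM2 : 2 ≤ M := by omega
    have hMpos : 0 < M := by omega
    have hM0 : (0 : ℝ) < (M : ℝ) := by exact_mod_cast hMpos
    have hMcast : ((M : ℕ) : ℝ) = ((m j : ℝ)) ^ 2 := by
      rw [hM]; push_cast; ring
    have hM8d : 8 / d < (M : ℝ) := by
      have hmm : (m J₀ : ℝ) ≤ (m j : ℝ) := by exact_mod_cast (hmono.monotone hjJ₀)
      have h0 : (0 : ℝ) ≤ (m J₀ : ℝ) := by positivity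
      have : ((m J₀ : ℝ)) ^ 2 ≤ ((m j : ℝ)) ^ 2 := by nlinarith
      rw [hMcast]
      linarith
    set θ : ℝ := 2 * Real.pi / (M : ℝ) with hθ
    clear_value θ
    set lam : ℂ := Complex.exp (2 * (Real.pi : ℂ) * Complex.I / (m j : ℂ) ^ 2) with hlam
    clear_value lam
    have hmC : ((m j : ℂ)) ^ 2 = (((M : ℝ) : ℝ) : ℂ) := by
      rw [hM]; push_cast; ring
    have hmC0 : ((m j : ℂ)) ^ 2 ≠ 0 := by
      rw [hmC]
      exact_mod_cast ne_of_gt hM0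
    have hMC0 : (((M : ℝ)) : ℂ) ≠ 0 := by
      exact_mod_cast ne_of_gt hM0
    have hexp_eq : 2 * (Real.pi : ℂ) * Complex.I / (m j : ℂ) ^ 2
        = ((θ : ℝ) : ℂ) * Complex.I := by
      rw [hθ, hmC]
      push_cast
      field_simp
      all_goals ring
    have hlam_form : lam = Complex.exp (((θ : ℝ) : ℂ) * Complex.I) := by
      rw [hlam, hexp_eq]
    have hlam0 : lam ≠ 0 := by
      rw [hlam]
      exact Complex.exp_ne_zero _
    have hlam1 : lam ≠ 1 := by
      rw [hlam_form, hθ]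
      exact exp_ne_one M hM2
    have habs_lam : ‖lam‖ = 1 := by
      rw [hlam_form]
      exact Complex.norm_exp_ofReal_mul_I θ
    -- |lam - 1| ≤ 2π/M
    have hpow_abs : ∀ n : ℕ, ‖lam ^ n - 1‖
        = 2 * Real.sin (Real.pi * ((n % M : ℕ) : ℝ) / (M : ℝ)) := by
      intro n
      rw [hlam_form, hθ]
      exact abs_pow_exp_sub_one M hM2 n
    have hlamsub_le : ‖lam - 1‖ ≤ 2 * Real.pi / (M : ℝ) := by
      have h1 := hpow_abs 1
      rw [pow_one] at h1
      have h2 : (1 : ℕ) % M = 1 := Nat.mod_eq_of_lt (by omega)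
      rw [h2] at h1
      rw [h1]
      have hsin := Real.sin_le (show (0 : ℝ) ≤ Real.pi * ((1 : ℕ) : ℝ) / (M : ℝ) by positivity)
      push_cast at hsin ⊢
      calc 2 * Real.sin (Real.pi * 1 / (M : ℝ)) ≤ 2 * (Real.pi * 1 / (M : ℝ)) := by linarith
        _ = 2 * Real.pi / (M : ℝ) := by ring
    have hlamsub_pos : 0 < ‖lam - 1‖ := by
      rw [norm_pos_iff]
      exact sub_ne_zero.mpr hlam1
    -- power formula
    have h2lam : ∀ y : X, f (2 * j + 1) (T y) = lam ^ 2 * f (2 * j + 1) y := by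
      intro y
      have hmu : Complex.exp (2 * (Real.pi : ℂ) * Complex.I * 2 / (m j : ℂ) ^ 2) = lam ^ 2 := by
        rw [hlam, ← Complex.exp_nat_mul]
        congr 1
        push_cast
        ring
      rw [hT2 y j, hmu]
    have h1lam : ∀ y : X, f (2 * j) (T y) = lam * f (2 * j) y + ω j * f (2 * j + 1) y := by
      intro y
      rw [hT1 y j, hlam]
    have pf := power_formula f T j lam (ω j) hlam0 hlam1 h1lam h2lam x
    set a : ℂ := f (2 * j) x with ha
    clear_value a
    set b : ℂ := f (2 * j + 1) x with hb
    clear_value b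
    have h_a : ‖a‖ ≤ K * ‖x‖ := by
      rw [ha]
      calc ‖f (2 * j) x‖ ≤ ‖f (2 * j)‖ * ‖x‖ := (f (2 * j)).le_opNorm x
        _ ≤ K * ‖x‖ := mul_le_mul_of_nonneg_right (hK _) (norm_nonneg _)
    -- key quantities
    set Mjq : ℝ := V j / (2 * Real.pi) - K * ‖x‖ with hMjq
    clear_value Mjq
    have hMjq_lb : 4 * K / d < Mjq := by
      have h2pi : (0 : ℝ) < 2 * Real.pi := by positivity
      have hdiv : (2 * Real.pi * (K * ‖x‖ + 4 * K / d)) / (2 * Real.pi)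
          < V j / (2 * Real.pi) := by gcongr
      have hteq : (2 * Real.pi * (K * ‖x‖ + 4 * K / d)) / (2 * Real.pi)
          = K * ‖x‖ + 4 * K / d := by
        field_simp
        all_goals ring
      rw [hMjq]
      rw [hteq] at hdiv
      linarith
    have h4Kd : 0 < 4 * K / d := div_pos (by linarith) hd0
    have hMjq0 : 0 < Mjq := lt_trans h4Kd hMjq_lb
    set η : ℝ := K / Mjq with hη
    clear_value η
    have hη0 : 0 < η := by rw [hη]; positivity
    have hη4 : η ≤ d / 4 := by
      rw [hη]
      have h1 : K / Mjq ≤ K / (4 * K / d) := by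
        apply div_le_div_of_nonneg_left hK0.le h4Kd hMjq_lb.le
      have h2 : K / (4 * K / d) = d / 4 := by
        field_simp
      linarith
    -- every return time has small rotation
    have hres : ∀ n ∈ Jset, ‖lam ^ n - 1‖ ≤ η := by
      intro n hn
      rw [hJset, Set.mem_setOf_eq] at hn
      obtain ⟨hn1, hn2⟩ := hn
      have hdist : ‖(T ^ n) x - x‖ ≤ 1 := by
        rw [← dist_eq_norm]
        exact le_of_lt (Metric.mem_ball.mp hn2)
      have hKb : ‖f (2 * j) ((T ^ n) x) - a‖ ≤ K := by
        rw [ha, ← map_sub]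
        calc ‖f (2 * j) ((T ^ n) x - x)‖ ≤ ‖f (2 * j)‖ * ‖(T ^ n) x - x‖ :=
              (f (2 * j)).le_opNorm _
          _ ≤ K * 1 := mul_le_mul (hK _) hdist (norm_nonneg _) hK0.le
          _ = K := mul_one K
      have hformula : f (2 * j) ((T ^ n) x) - a
          = (lam ^ n - 1) * a
            + ω j * (((lam ^ 2) ^ n - lam ^ n) / (lam ^ 2 - lam)) * b := by
        rw [(pf n).2]
        ring
      set Q : ℂ := ((lam ^ 2) ^ n - lam ^ n) / (lam ^ 2 - lam) with hQdef
      clear_value Q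
      have hQ : ‖ω j * Q * b‖
          = ‖lam ^ n - 1‖ * (‖ω j‖ * ‖b‖ / ‖lam - 1‖) := by
        have h1 : (lam ^ 2) ^ n - lam ^ n = lam ^ n * (lam ^ n - 1) := by ring
        have h2 : lam ^ 2 - lam = lam * (lam - 1) := by ring
        have hln : ‖lam ^ n‖ = 1 := by
          rw [norm_pow, habs_lam, one_pow]
        rw [hQdef, h1, h2]
        simp only [norm_mul, norm_div]
        rw [hln, habs_lam, one_mul, one_mul]
        ring
      -- lower bound on the displacement
      have hW : V j / (2 * Real.pi) ≤ ‖ω j‖ * ‖b‖ / ‖lam - 1‖ := by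
        rw [div_le_div_iff₀ (by positivity) hlamsub_pos]
        have hVval : V j = (M : ℝ) * (‖ω j‖ * ‖b‖) := by
          rw [hV]
          show ((m j : ℝ)) ^ 2 * ‖ω j‖ * ‖f (2 * j + 1) x‖ = (M : ℝ) * (‖ω j‖ * ‖b‖)
          rw [← hb, hMcast]
          ring
        rw [hVval]
        have hMl : (M : ℝ) * ‖lam - 1‖ ≤ 2 * Real.pi := by
          have := mul_le_mul_of_nonneg_left hlamsub_le hM0.le
          calc (M : ℝ) * ‖lam - 1‖ ≤ (M : ℝ) * (2 * Real.pi / (M : ℝ)) := this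
            _ = 2 * Real.pi := by field_simp
        have hωb : 0 ≤ ‖ω j‖ * ‖b‖ := by positivity
        have hmul := mul_le_mul_of_nonneg_left hMl hωb
        linarith only [hmul]
      have hlow : ‖lam ^ n - 1‖ * Mjq
          ≤ ‖f (2 * j) ((T ^ n) x) - a‖ := by
        have htri : ‖ω j * Q * b‖
            ≤ ‖f (2 * j) ((T ^ n) x) - a‖ + ‖(lam ^ n - 1) * a‖ := by
          have heq : ω j * Q * b
              = (f (2 * j) ((T ^ n) x) - a) - (lam ^ n - 1) * a := by
            rw [hformula]; ring
          rw [heq]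
          exact norm_sub_le _ _
        have hna : ‖(lam ^ n - 1) * a‖ = ‖lam ^ n - 1‖ * ‖a‖ := by
          simp only [norm_mul]
        rw [hQ, hna] at htri
        have hMjq_le : Mjq ≤ ‖ω j‖ * ‖b‖ / ‖lam - 1‖ - ‖a‖ := by
          rw [hMjq]
          linarith only [hW, h_a, hMjq, h_a]
        have hmul := mul_le_mul_of_nonneg_left hMjq_le
          (norm_nonneg (lam ^ n - 1))
        linarith only [hmul, htri]
      have hfin : ‖lam ^ n - 1‖ * Mjq ≤ K := le_trans hlow hKb
      rw [hη, le_div_iff₀ hMjq0]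
      exact hfin
    -- the residues are confined
    set B : ℕ := ⌊η * (M : ℝ) / 4⌋₊ with hB
    clear_value B
    set S : Finset ℕ := (Finset.range M).filter
      (fun r => ((r : ℝ) ≤ η * (M : ℝ) / 4 ∨ ((M : ℝ) - (r : ℝ)) ≤ η * (M : ℝ) / 4)) with hS
    clear_value S
    have hJS : ∀ n ∈ Jset, n % M ∈ S := by
      intro n hn
      rw [hS, Finset.mem_filter, Finset.mem_range]
      refine ⟨Nat.mod_lt _ hMpos, ?_⟩
      have h1 := hres n hn
      rw [hpow_abs n] at h1
      exact residue_small M hM2 n η h1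
    have hubd : d ≤ (S.card : ℝ) / (M : ℝ) := by
      rw [hd]
      exact ubd_le Jset M hMpos S hJS
    -- cardinality of S
    have hSsub : S ⊆ Finset.range (B + 1) ∪ (Finset.range (B + 1)).image (fun i => M - 1 - i) := by
      intro r hrS
      rw [hS, Finset.mem_filter, Finset.mem_range] at hrS
      obtain ⟨hrM, hcase⟩ := hrS
      rw [Finset.mem_union]
      rcases hcase with h | h
      · left
        rw [Finset.mem_range]
        have : r ≤ B := by rw [hB]; exact Nat.le_floor h
        omega
      · right
        rw [Finset.mem_image]
        have hrle : (M - r : ℕ) ≤ B := by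
          rw [hB]
          apply Nat.le_floor
          have hcast : ((M - r : ℕ) : ℝ) = (M : ℝ) - (r : ℝ) := by
            push_cast [Nat.cast_sub hrM.le]
            ring
          rw [hcast]
          exact h
        refine ⟨M - 1 - r, ?_, ?_⟩
        · rw [Finset.mem_range]
          omega
        · omega
    have hScard : S.card ≤ 2 * (B + 1) := by
      calc S.card ≤ _ := Finset.card_le_card hSsub
        _ ≤ (Finset.range (B + 1)).card + ((Finset.range (B + 1)).image (fun i => M - 1 - i)).card :=
            Finset.card_union_le _ _
        _ ≤ (B + 1) + (B + 1) := by
            have h1 : (Finset.range (B + 1)).card = B + 1 := Finset.card_range _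
            have h2 : ((Finset.range (B + 1)).image (fun i => M - 1 - i)).card ≤ B + 1 := by
              calc _ ≤ (Finset.range (B + 1)).card := Finset.card_image_le
                _ = B + 1 := Finset.card_range _
            omega
        _ = 2 * (B + 1) := by ring
    -- final numeric contradiction
    have hBr : (B : ℝ) ≤ η * (M : ℝ) / 4 := by
      rw [hB]
      exact Nat.floor_le (by positivity)
    have hSr : (S.card : ℝ) ≤ 2 * ((B : ℝ) + 1) := by exact_mod_cast hScard
    have hfin1 : (S.card : ℝ) / (M : ℝ) ≤ (η * (M : ℝ) / 2 + 2) / (M : ℝ) := by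
      have hnum : (S.card : ℝ) ≤ η * (M : ℝ) / 2 + 2 := by linarith only [hSr, hBr]
      gcongr
    have hfin2 : (η * (M : ℝ) / 2 + 2) / (M : ℝ) = η / 2 + 2 / (M : ℝ) := by
      field_simp [hM0.ne']
      all_goals ring
    have hfin3 : 2 / (M : ℝ) < d / 4 := by
      have h8 : 8 < d * (M : ℝ) := by
        have h9 := (div_lt_iff₀ hd0).mp hM8d
        linarith only [h9]
      rw [div_lt_div_iff₀ hM0 (by norm_num : (0:ℝ) < 4)]
      linarith only [h8]
    have hfin4 : d ≤ η / 2 + 2 / (M : ℝ) := by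
      rw [← hfin2]
      exact le_trans hubd hfin1
    linarith only [hfin4, hη4, hfin3, hd0]
  exact ((isMeagre_iUnion hGmeagre).mono hsub)
end
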